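/- Let m, n ≥ 1, let ψ : ℝ₊ → V, and for q ∈ 𝔽[X]^m with q ≠ 0 define B_q = {A ∈ I^{mn} : there exists p ∈ 𝔽[X]^n with ‖qA − p‖_∞ < ψ(‖q‖_∞)}. Then μ(B_q) = ψ(‖q‖_∞)^n. -/

import Mathlib

open MeasureTheory Filter Asymptotics
open scoped Classical

/-- The absolute value on `L`, the field of formal Laurent series in `X⁻¹` over
the finite field `F` with `k = Fintype.card F` elements (here realised as
`LaurentSeries F` in the variable `t = X⁻¹`): `‖x‖ = k ^ (-order x)`, `‖0‖ = 0`. -/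
noncomputable def lnorm (F : Type*) [Field F] [Fintype F] (x : LaurentSeries F) : ℝ :=
  if x = 0 then 0 else (Fintype.card F : ℝ) ^ (-x.order)

/-- The embedding of the polynomial ring `F[X]` into `L`, sending `X` to the
Laurent series with a single term of order `-1` (the element of norm `k`). -/
noncomputable def polyToL (F : Type*) [Field F] [Fintype F] (p : Polynomial F) :
    LaurentSeries F :=
  Polynomial.aeval (HahnSeries.single (-1 : ℤ) (1 : F)) p

/-- Sup norm `‖·‖_∞` of a vector over `L`. -/
noncomputable def vnorm (F : Type*) [Field F] [Fintype F] {ι : Type*}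
    (v : ι → LaurentSeries F) : ℝ :=
  ⨆ i, lnorm F (v i)

/-- Sup norm `‖·‖_∞` of a vector of polynomials, viewed inside `L`. -/
noncomputable def pvnorm (F : Type*) [Field F] [Fintype F] {ι : Type*}
    (q : ι → Polynomial F) : ℝ :=
  vnorm F fun i => polyToL F (q i)

/-- The row vector `q A ∈ L^n`, for `q ∈ F[X]^m` and an `m × n` matrix `A` over `L`. -/
noncomputable def rowMul (F : Type*) [Field F] [Fintype F] {m n : ℕ}
    (q : Fin m → Polynomial F) (A : Fin m → Fin n → LaurentSeries F) :
    Fin n → LaurentSeries F :=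
  fun j => ∑ i, polyToL F (q i) * A i j

noncomputable instance (F : Type*) [Field F] [Fintype F] :
    MeasurableSpace (LaurentSeries F) := borel _

/-- The unit ball `I^{mn}` in the space of `m × n` matrices over `L`. -/
def unitBallM (F : Type*) [Field F] [Fintype F] (m n : ℕ) :
    Set (Fin m → Fin n → LaurentSeries F) :=
  {A | ∀ i j, lnorm F (A i j) < 1}

/-- The set `B_q ⊆ I^{mn}` of matrices `A` in the unit ball for which some
`p ∈ F[X]^n` satisfies `‖q A - p‖_∞ < ψ(‖q‖_∞)`. -/
def approxSet (F : Type*) [Field F] [Fintype F] {m n : ℕ} (ψ : ℝ → ℝ)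
    (q : Fin m → Polynomial F) : Set (Fin m → Fin n → LaurentSeries F) :=
  {A | (∀ i j, lnorm F (A i j) < 1) ∧
    ∃ p : Fin n → Polynomial F,
      vnorm F (fun j => rowMul F q A j - polyToL F (p j)) < ψ (pvnorm F q)}

section AuxLemmas
open scoped Multiplicative

set_option linter.unusedSectionVars false
variable {F : Type*} [Field F] [Fintype F]

lemma aux_one_lt_k : (1:ℝ) < (Fintype.card F : ℝ) := by
  exact_mod_cast Fintype.one_lt_card

lemma polyToL_monomial (u : ℕ) (a : F) :
    polyToL F (Polynomial.monomial u a) = HahnSeries.single (-(u:ℤ)) a := by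
  have h1 : (algebraMap F (LaurentSeries F)) a = HahnSeries.single (0:ℤ) a := by
    rw [HahnSeries.algebraMap_apply']
    rw [show algebraMap F (PowerSeries F) a = PowerSeries.C a from rfl]
    rw [HahnSeries.ofPowerSeries_C, HahnSeries.C_apply]
  rw [polyToL, Polynomial.aeval_monomial, HahnSeries.single_pow, one_pow, h1,
    HahnSeries.single_mul_single, zero_add, mul_one]
  norm_num

lemma coeff_polyToL (p : Polynomial F) (s : ℤ) :
    (polyToL F p).coeff s = if s ≤ 0 then p.coeff (-s).toNat else 0 := by
  induction p using Polynomial.induction_on' with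
  | add p r hp hr =>
    have : polyToL F (p + r) = polyToL F p + polyToL F r := by
      simp only [polyToL, map_add]
    rw [this, HahnSeries.coeff_add, hp, hr]
    split_ifs <;> simp
  | monomial u a =>
    rw [polyToL_monomial, HahnSeries.coeff_single, Polynomial.coeff_monomial]
    by_cases h : s = -(u:ℤ)
    · rw [if_pos h, if_pos (by omega), if_pos (by omega)]
    · rw [if_neg h]
      split_ifs with h1 h2
      · exact absurd (by omega : s = -(u:ℤ)) h
      · rfl
      · rfl

lemma coeff_polyToL_neg_natCast (p : Polynomial F) (u : ℕ) :
    (polyToL F p).coeff (-(u:ℤ)) = p.coeff u := by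
  rw [coeff_polyToL, if_pos (by omega)]
  congr 1
  omega

lemma polyToL_ne_zero {p : Polynomial F} (hp : p ≠ 0) : polyToL F p ≠ 0 := by
  intro h
  have h2 := coeff_polyToL_neg_natCast p p.natDegree
  rw [h, HahnSeries.coeff_zero] at h2
  exact (Polynomial.leadingCoeff_ne_zero.mpr hp) h2.symm

lemma order_polyToL {p : Polynomial F} (hp : p ≠ 0) :
    (polyToL F p).order = -(p.natDegree : ℤ) := by
  refine le_antisymm (HahnSeries.order_le_of_coeff_ne_zero ?_) ?_
  · rw [coeff_polyToL_neg_natCast]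
    exact Polynomial.leadingCoeff_ne_zero.mpr hp
  · by_contra hlt
    push_neg at hlt
    have h1 := HahnSeries.coeff_order_eq_zero.not.mpr (polyToL_ne_zero hp)
    rw [coeff_polyToL, if_pos (by omega)] at h1
    have h2 := Polynomial.le_natDegree_of_ne_zero h1
    omega

lemma lnorm_polyToL {p : Polynomial F} (hp : p ≠ 0) :
    lnorm F (polyToL F p) = (Fintype.card F : ℝ) ^ (p.natDegree : ℤ) := by
  rw [lnorm, if_neg (polyToL_ne_zero hp), order_polyToL hp, neg_neg]

lemma lnorm_lt_zpow_iff (x : LaurentSeries F) (e : ℤ) :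
    lnorm F x < (Fintype.card F : ℝ) ^ e ↔ ∀ s : ℤ, s < 1 - e → x.coeff s = 0 := by
  have hk := aux_one_lt_k (F := F)
  by_cases hx : x = 0
  · subst hx
    simp only [lnorm, if_pos rfl]
    constructor
    · intro _ s _
      exact HahnSeries.coeff_zero
    · intro _
      exact zpow_pos (by linarith) e
  · rw [lnorm, if_neg hx, zpow_lt_zpow_iff_right₀ hk]
    constructor
    · intro h s hs
      exact HahnSeries.coeff_eq_zero_of_lt_order (by omega)
    · intro h
      by_contra hc
      push_neg at hc
      exact HahnSeries.coeff_order_eq_zero.not.mpr hx (h _ (by omega))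

lemma vnorm_lt_iff {ι : Type*} [Finite ι] [Nonempty ι] (v : ι → LaurentSeries F) (r : ℝ) :
    vnorm F v < r ↔ ∀ i, lnorm F (v i) < r := by
  obtain ⟨i₀, hi₀⟩ := Finite.exists_max fun i => lnorm F (v i)
  have hsup : vnorm F v = lnorm F (v i₀) := by
    rw [vnorm]
    exact le_antisymm (ciSup_le hi₀) (le_ciSup (f := fun i => lnorm F (v i)) (Set.Finite.bddAbove (Set.finite_range _)) i₀)
  constructor
  · intro h i
    exact lt_of_le_of_lt (hi₀ i) (hsup ▸ h)
  · intro h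
    rw [hsup]
    exact h i₀

lemma hahn_coeff_sum {ι : Type*} (s : Finset ι) (f : ι → LaurentSeries F) (a : ℤ) :
    (∑ i ∈ s, f i).coeff a = ∑ i ∈ s, (f i).coeff a := by
  classical
  induction s using Finset.induction_on with
  | empty => simp
  | insert a s h ih => rw [Finset.sum_insert h, Finset.sum_insert h, HahnSeries.coeff_add, ih]

lemma coeff_polyToL_mul (p : Polynomial F) (y : LaurentSeries F) (s : ℤ) :
    (polyToL F p * y).coeff s = ∑ u ∈ p.support, p.coeff u * y.coeff (s + u) := by
  have hrep : polyToL F p = ∑ u ∈ p.support, HahnSeries.single (-(u:ℤ)) (p.coeff u) := by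
    conv_lhs => rw [p.as_sum_support]
    simp only [polyToL, map_sum]
    exact Finset.sum_congr rfl fun u _ => polyToL_monomial u _
  rw [hrep, Finset.sum_mul, hahn_coeff_sum]
  refine Finset.sum_congr rfl fun u _ => ?_
  have h1 := HahnSeries.coeff_single_mul_add (r := p.coeff u) (x := y) (a := s + (u:ℤ)) (b := -(u:ℤ))
  rw [show (s + (u:ℤ)) + (-(u:ℤ)) = s from by ring] at h1
  exact h1

lemma rowMul_coeff {m n : ℕ} (q : Fin m → Polynomial F) (A : Fin m → Fin n → LaurentSeries F)
    (jj : Fin n) (s : ℤ) :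
    (rowMul F q A jj).coeff s = ∑ i, ∑ u ∈ (q i).support, (q i).coeff u * (A i jj).coeff (s + u) := by
  rw [rowMul, hahn_coeff_sum]
  exact Finset.sum_congr rfl fun i _ => coeff_polyToL_mul _ _ _

lemma rowMul_sub {m n : ℕ} (q : Fin m → Polynomial F) (A B : Fin m → Fin n → LaurentSeries F)
    (jj : Fin n) :
    rowMul F q (A - B) jj = rowMul F q A jj - rowMul F q B jj := by
  simp only [rowMul, Pi.sub_apply, mul_sub]
  rw [Finset.sum_sub_distrib]

instance aux_borelSpace : BorelSpace (LaurentSeries F) := ⟨rfl⟩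

lemma measurableSet_coeff_eq (t : ℤ) (a : F) :
    MeasurableSet {y : LaurentSeries F | y.coeff t = a} := by
  have hopen : IsOpen {y : LaurentSeries F | y.coeff t = a} := by
    letI : UniformSpace F := ⊥
    haveI : DiscreteTopology F := ⟨rfl⟩
    exact (isOpen_discrete {a}).preimage (LaurentSeries.uniformContinuous_coeff (K := F) t).continuous
  exact hopen.measurableSet

lemma measurable_coeff [MeasurableSpace F] (t : ℤ) :
    Measurable fun y : LaurentSeries F => y.coeff t :=
  measurable_to_countable fun y => measurableSet_coeff_eq t (y.coeff t)

instance aux_measurableAdd : MeasurableAdd (LaurentSeries F) :=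
  ⟨fun c => (continuous_add_left c).measurable, fun c => (continuous_add_right c).measurable⟩

end AuxLemmas

set_option maxHeartbeats 1000000 in
/-- **Proposition 1.**  For `m, n ≥ 1`, `ψ : ℝ₊ → V` and nonzero `q ∈ F[X]^m`,
the set `B_q = {A ∈ I^{mn} : ∃ p ∈ F[X]^n, ‖q A - p‖_∞ < ψ(‖q‖_∞)}` has Haar
measure `μ(B_q) = ψ(‖q‖_∞)^n` (with `μ` normalised so `μ(I^{mn}) = 1`). -/
theorem measure_approxSet
    {F : Type*} [Field F] [Fintype F]
    (m n : ℕ) (hm : 1 ≤ m) (hn : 1 ≤ n)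
    (ψ : ℝ → ℝ)
    (hψV : ∀ x > (0 : ℝ), ∃ j : ℕ, ψ x = (Fintype.card F : ℝ) ^ (-(j : ℤ)))
    (μ : Measure (Fin m → Fin n → LaurentSeries F)) [μ.IsAddHaarMeasure]
    (hμ : μ (unitBallM F m n) = 1)
    (q : Fin m → Polynomial F) (hq : q ≠ 0) :
    μ (approxSet F (n := n) ψ q) = ENNReal.ofReal (ψ (pvnorm F q) ^ n) := by
  classical
  have hk : (1:ℝ) < (Fintype.card F : ℝ) := aux_one_lt_k
  have hk0 : (0:ℝ) < (Fintype.card F : ℝ) := by linarith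
  haveI : NeZero m := ⟨by omega⟩
  haveI : NeZero n := ⟨by omega⟩
  -- choose the index of maximal norm
  obtain ⟨i₀, hi₀⟩ := Finite.exists_max fun i => lnorm F (polyToL F (q i))
  obtain ⟨i1, hi1⟩ : ∃ i, q i ≠ 0 := by
    by_contra hcon
    push_neg at hcon
    exact hq (funext hcon)
  have hq0 : q i₀ ≠ 0 := by
    intro h0
    have h1 := hi₀ i1
    rw [h0] at h1
    have h2 : polyToL F (0 : Polynomial F) = 0 := by simp [polyToL]
    rw [h2] at h1
    rw [lnorm_polyToL hi1] at h1
    have h3 : lnorm F (0 : LaurentSeries F) = 0 := by simp [lnorm]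
    rw [h3] at h1
    have := zpow_pos hk0 ((q i1).natDegree : ℤ)
    linarith
  set D : ℕ := (q i₀).natDegree with hD
  set c : LaurentSeries F := polyToL F (q i₀) with hc
  have hc0 : c ≠ 0 := polyToL_ne_zero hq0
  have hcord : c.order = -(D:ℤ) := order_polyToL hq0
  have hpv : pvnorm F q = (Fintype.card F : ℝ) ^ (D:ℤ) := by
    have hsup : pvnorm F q = lnorm F c := by
      rw [pvnorm, vnorm]
      exact le_antisymm (ciSup_le hi₀)
        (le_ciSup (f := fun i => lnorm F (polyToL F (q i)))
          (Set.Finite.bddAbove (Set.finite_range _)) i₀)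
    rw [hsup, hc, lnorm_polyToL hq0]
  have hpvpos : 0 < pvnorm F q := by
    rw [hpv]
    exact zpow_pos hk0 _
  obtain ⟨j, hj⟩ := hψV _ hpvpos
  have hdeg : ∀ i, ∀ u ∈ (q i).support, (u:ℤ) ≤ (D:ℤ) := by
    intro i u hu
    have hqi : q i ≠ 0 := by
      intro h
      rw [h] at hu
      simp at hu
    have h1 := hi₀ i
    rw [lnorm_polyToL hqi, hc, lnorm_polyToL hq0] at h1
    have hdd : ((q i).natDegree : ℤ) ≤ ((q i₀).natDegree :ℤ) := by
      by_contra hgt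
      push_neg at hgt
      exact absurd h1 (not_le.mpr (zpow_lt_zpow_right₀ hk hgt))
    have h2 := Polynomial.le_natDegree_of_mem_supp u hu
    omega
  -- the coefficient description of the target set
  set Hs : Set (Fin m → Fin n → LaurentSeries F) :=
    {A | (∀ i jj, ∀ s : ℤ, s ≤ 0 → (A i jj).coeff s = 0) ∧
         (∀ jj, ∀ s : ℤ, 1 ≤ s → s ≤ (j:ℤ) → (rowMul F q A jj).coeff s = 0)} with hHs
  have hball_iff : ∀ x : LaurentSeries F, lnorm F x < 1 ↔ ∀ s:ℤ, s ≤ 0 → x.coeff s = 0 := by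
    intro x
    have h1 := lnorm_lt_zpow_iff x 0
    rw [zpow_zero] at h1
    rw [h1]
    constructor <;> intro h s hs <;> exact h s (by omega)
  have hlow : ∀ A : Fin m → Fin n → LaurentSeries F,
      (∀ i jj, ∀ s : ℤ, s ≤ 0 → (A i jj).coeff s = 0) →
      ∀ jj, ∀ s : ℤ, s ≤ -(D:ℤ) → (rowMul F q A jj).coeff s = 0 := by
    intro A hA jj s hs
    rw [rowMul_coeff]
    refine Finset.sum_eq_zero fun i _ => Finset.sum_eq_zero fun u hu => ?_
    rw [hA i jj (s + u) (by have := hdeg i u hu; omega), mul_zero]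
  -- the per-column equivalence
  have hcol : ∀ x : LaurentSeries F, (∀ s : ℤ, s ≤ -(D:ℤ) → x.coeff s = 0) →
      ((∃ p : Polynomial F, lnorm F (x - polyToL F p) < (Fintype.card F:ℝ) ^ (-(j:ℤ))) ↔
        (∀ s : ℤ, 1 ≤ s → s ≤ (j:ℤ) → x.coeff s = 0)) := by
    intro x hx
    constructor
    · rintro ⟨p, hp⟩ s hs1 hsj
      rw [lnorm_lt_zpow_iff] at hp
      have h1 := hp s (by omega)
      rw [HahnSeries.coeff_sub, sub_eq_zero] at h1
      rw [h1, coeff_polyToL, if_neg (by omega)]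
    · intro hcoef
      refine ⟨∑ u ∈ Finset.range D, Polynomial.monomial u (x.coeff (-(u:ℤ))), ?_⟩
      rw [lnorm_lt_zpow_iff]
      intro s hs
      rw [HahnSeries.coeff_sub, sub_eq_zero]
      have hrep : polyToL F (∑ u ∈ Finset.range D, Polynomial.monomial u (x.coeff (-(u:ℤ))))
          = ∑ u ∈ Finset.range D, HahnSeries.single (-(u:ℤ)) (x.coeff (-(u:ℤ))) := by
        simp only [polyToL, map_sum]
        exact Finset.sum_congr rfl fun u _ => polyToL_monomial u _
      rw [hrep, hahn_coeff_sum]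
      by_cases hs1 : 1 ≤ s
      · rw [hcoef s hs1 (by omega)]
        refine (Finset.sum_eq_zero fun u hu => ?_).symm
        rw [HahnSeries.coeff_single, if_neg (by omega)]
      · by_cases hs2 : s ≤ -(D:ℤ)
        · rw [hx s hs2]
          refine (Finset.sum_eq_zero fun u hu => ?_).symm
          rw [Finset.mem_range] at hu
          rw [HahnSeries.coeff_single, if_neg (by omega)]
        · have hu0 : (-s).toNat ∈ Finset.range D := Finset.mem_range.mpr (by omega)
          rw [Finset.sum_eq_single_of_mem _ hu0]
          · rw [HahnSeries.coeff_single, if_pos (by omega)]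
            congr 1
            omega
          · intro u hu hne
            rw [Finset.mem_range] at hu
            rw [HahnSeries.coeff_single, if_neg (by omega)]
  -- identification of the approximation set
  have hset : approxSet F (n := n) ψ q = Hs := by
    ext A
    simp only [approxSet, Set.mem_setOf_eq, hHs]
    constructor
    · rintro ⟨hball, p, hp⟩
      have hball' : ∀ i jj, ∀ s : ℤ, s ≤ 0 → (A i jj).coeff s = 0 :=
        fun i jj => (hball_iff (A i jj)).mp (hball i jj)
      refine ⟨hball', fun jj s h1 h2 => ?_⟩
      rw [hj, vnorm_lt_iff] at hp
      exact (hcol (rowMul F q A jj) (hlow A hball' jj)).mp ⟨p jj, hp jj⟩ s h1 h2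
    · rintro ⟨hball', hcoef⟩
      refine ⟨fun i jj => (hball_iff (A i jj)).mpr (hball' i jj), ?_⟩
      have hex : ∀ jj, ∃ p : Polynomial F,
          lnorm F (rowMul F q A jj - polyToL F p) < (Fintype.card F:ℝ)^(-(j:ℤ)) :=
        fun jj => (hcol _ (hlow A hball' jj)).mpr (hcoef jj)
      choose p hp using hex
      exact ⟨p, by rw [hj, vnorm_lt_iff]; exact hp⟩
  -- measurability
  letI : MeasurableSpace F := ⊤
  haveI : MeasurableSingletonClass F := ⟨fun _ => trivial⟩
  haveI : MeasurableAdd₂ F := ⟨measurable_of_countable _⟩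
  haveI : MeasurableMul₂ F := ⟨measurable_of_countable _⟩
  have hmeasH : MeasurableSet Hs := by
    rw [hHs]
    simp only [Set.setOf_and, Set.setOf_forall]
    refine MeasurableSet.inter ?_ ?_
    · refine MeasurableSet.iInter fun i => MeasurableSet.iInter fun jj =>
        MeasurableSet.iInter fun s => MeasurableSet.iInter fun _ => ?_
      exact (measurableSet_coeff_eq s 0).preimage
        ((measurable_pi_apply jj).comp (measurable_pi_apply i))
    · refine MeasurableSet.iInter fun jj => MeasurableSet.iInter fun s =>
        MeasurableSet.iInter fun _ => MeasurableSet.iInter fun _ => ?_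
      have hrw : {A : Fin m → Fin n → LaurentSeries F | (rowMul F q A jj).coeff s = 0}
          = {A | (∑ i, ∑ u ∈ (q i).support, (q i).coeff u * (A i jj).coeff (s + u)) = 0} := by
        ext A
        simp only [Set.mem_setOf_eq, rowMul_coeff]
      rw [hrw]
      have hg : Measurable fun A : Fin m → Fin n → LaurentSeries F =>
          ∑ i, ∑ u ∈ (q i).support, (q i).coeff u * (A i jj).coeff (s + u) := by
        refine Finset.measurable_sum _ fun i _ => Finset.measurable_sum _ fun u _ => ?_
        exact Measurable.const_mul
          ((measurable_coeff (s+u)).comp ((measurable_pi_apply jj).comp (measurable_pi_apply i))) _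
      exact hg (MeasurableSet.singleton 0)
  -- the section map
  set cInv : LaurentSeries F := c⁻¹ with hcInv
  have hccInv : c * cInv = 1 := mul_inv_cancel₀ hc0
  have hcInv0 : cInv ≠ 0 := inv_ne_zero hc0
  have hcInvord : cInv.order = (D:ℤ) := by
    have h1 := HahnSeries.order_mul hc0 hcInv0
    rw [hccInv, HahnSeries.order_one, hcord] at h1
    omega
  set T := (Fin n → Fin j → F) with hT
  set y : T → Fin n → LaurentSeries F :=
    fun t jj => ∑ s : Fin j, HahnSeries.single (((s:ℕ):ℤ)+1) (t jj s) with hy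
  have hycoeff1 : ∀ t jj (s : Fin j), (y t jj).coeff (((s:ℕ):ℤ)+1) = t jj s := by
    intro t jj s
    rw [hy]
    dsimp only
    rw [hahn_coeff_sum, Finset.sum_eq_single_of_mem s (Finset.mem_univ s)]
    · rw [HahnSeries.coeff_single, if_pos rfl]
    · intro u _ hne
      rw [HahnSeries.coeff_single, if_neg]
      intro hcon
      apply hne
      have : (u:ℕ) = (s:ℕ) := by omega
      exact Fin.ext this
  have hycoeff0 : ∀ t jj (z : ℤ), z ≤ 0 → (y t jj).coeff z = 0 := by
    intro t jj z hz
    rw [hy]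
    dsimp only
    rw [hahn_coeff_sum]
    refine Finset.sum_eq_zero fun u _ => ?_
    rw [HahnSeries.coeff_single, if_neg (by omega)]
  have hyc0 : ∀ t jj (z : ℤ), z ≤ 0 → (y t jj * cInv).coeff z = 0 := by
    intro t jj z hz
    by_cases hy0 : y t jj = 0
    · rw [hy0, zero_mul, HahnSeries.coeff_zero]
    · apply HahnSeries.coeff_eq_zero_of_lt_order
      rw [HahnSeries.order_mul hy0 hcInv0, hcInvord]
      have h1 : 1 ≤ (y t jj).order := by
        by_contra hcon
        push_neg at hcon
        exact HahnSeries.coeff_order_eq_zero.not.mpr hy0 (hycoeff0 t jj _ (by omega))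
      omega
  set sect : T → (Fin m → Fin n → LaurentSeries F) :=
    fun t i jj => if i = i₀ then y t jj * cInv else 0 with hsect
  have hsect_coeff0 : ∀ t i jj (z:ℤ), z ≤ 0 → (sect t i jj).coeff z = 0 := by
    intro t i jj z hz
    rw [hsect]
    dsimp only
    split
    · exact hyc0 t jj z hz
    · rw [HahnSeries.coeff_zero]
  have hrow_sect : ∀ t jj, rowMul F q (sect t) jj = y t jj := by
    intro t jj
    rw [rowMul, Finset.sum_eq_single_of_mem i₀ (Finset.mem_univ _)]
    · rw [hsect]
      dsimp only
      rw [if_pos rfl, ← hc, mul_comm (y t jj) cInv, ← mul_assoc, hccInv, one_mul]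
    · intro i _ hne
      rw [hsect]
      dsimp only
      rw [if_neg hne, mul_zero]
  -- the coefficient description of the unit ball
  have hU : unitBallM F m n
      = {A : Fin m → Fin n → LaurentSeries F | ∀ i jj, ∀ s:ℤ, s ≤ 0 → (A i jj).coeff s = 0} := by
    ext A
    simp only [unitBallM, Set.mem_setOf_eq]
    constructor
    · intro h i jj
      exact (hball_iff (A i jj)).mp (h i jj)
    · intro h i jj
      exact (hball_iff (A i jj)).mpr (h i jj)
  -- cosets
  set S : T → Set (Fin m → Fin n → LaurentSeries F) :=
    fun t => (fun A => -sect t + A) ⁻¹' Hs with hS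
  have hrow_shift : ∀ t A jj, rowMul F q (-sect t + A) jj = rowMul F q A jj - y t jj := by
    intro t A jj
    rw [show -sect t + A = A - sect t from by abel, rowMul_sub, hrow_sect]
  have hdet : ∀ t A, A ∈ S t → ∀ jj (s : Fin j),
      t jj s = (rowMul F q A jj).coeff (((s:ℕ):ℤ)+1) := by
    intro t A hA jj s
    have hsj : ((s:ℕ):ℤ)+1 ≤ (j:ℤ) := by
      have := s.isLt
      omega
    have h2 := hA.2 jj (((s:ℕ):ℤ)+1) (by omega) hsj
    rw [hrow_shift, HahnSeries.coeff_sub, hycoeff1, sub_eq_zero] at h2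
    exact h2.symm
  have hcover : unitBallM F m n = ⋃ t : T, S t := by
    rw [hU]
    ext A
    simp only [Set.mem_setOf_eq, Set.mem_iUnion]
    constructor
    · intro hA
      refine ⟨fun jj s => (rowMul F q A jj).coeff (((s:ℕ):ℤ)+1), ?_, ?_⟩
      · intro i jj z hz
        simp only [Pi.add_apply, Pi.neg_apply, HahnSeries.coeff_add, HahnSeries.coeff_neg]
        have e1 : (sect (fun jj s => (rowMul F q A jj).coeff (((s:ℕ):ℤ)+1)) i jj).coeff z = 0 :=
          hsect_coeff0 (fun jj s => (rowMul F q A jj).coeff (((s:ℕ):ℤ)+1)) i jj z hz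
        rw [e1, hA i jj z hz, neg_zero, zero_add]
      · intro jj z h1 hz
        rw [hrow_shift, HahnSeries.coeff_sub]
        have hjlt : (z-1).toNat < j := by omega
        have e2 := hycoeff1 (fun jj s => (rowMul F q A jj).coeff (((s:ℕ):ℤ)+1)) jj ⟨(z-1).toNat, hjlt⟩
        have hz' : (((((⟨(z-1).toNat, hjlt⟩ : Fin j)):ℕ):ℤ)+1) = z := by
          simp only [Fin.val_mk]
          omega
        rw [hz'] at e2
        rw [e2]
        exact sub_self _
    · rintro ⟨t, ht⟩ i jj z hz
      have h1 := ht.1 i jj z hz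
      simp only [Pi.add_apply, Pi.neg_apply, HahnSeries.coeff_add, HahnSeries.coeff_neg] at h1
      rw [hsect_coeff0 _ _ _ _ hz] at h1
      simpa using h1
  have hdisj : Pairwise (Function.onFun Disjoint S) := by
    intro t t' hne
    rw [Function.onFun, Set.disjoint_left]
    intro A hA hA'
    exact hne (by
      funext jj s
      exact (hdet t A hA jj s).trans (hdet t' A hA' jj s).symm)
  have hmeasS : ∀ t, MeasurableSet (S t) := by
    intro t
    exact hmeasH.preimage (measurable_const_add _)
  have hμS : ∀ t, μ (S t) = μ Hs := fun t => measure_preimage_add μ _ Hs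
  have hsum : (1 : ENNReal) = Fintype.card T • μ Hs := by
    calc (1 : ENNReal) = μ (unitBallM F m n) := hμ.symm
    _ = μ (⋃ t : T, S t) := congrArg μ hcover
    _ = ∑' t : T, μ (S t) := measure_iUnion hdisj hmeasS
    _ = ∑ t : T, μ (S t) := tsum_fintype _
    _ = ∑ _t : T, μ Hs := by simp only [hμS]
    _ = Fintype.card T • μ Hs := by rw [Finset.sum_const, Finset.card_univ]
  have hcardT : Fintype.card T = (Fintype.card F ^ j) ^ n := by
    show Fintype.card (Fin n → Fin j → F) = _
    simp [Fintype.card_fun]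
  have hcast0 : (((Fintype.card F ^ j) ^ n : ℕ) : ENNReal) ≠ 0 := by
    simp only [ne_eq, Nat.cast_eq_zero, pow_eq_zero_iff', Fintype.card_ne_zero]
    tauto
  have hHval : μ Hs = (((Fintype.card F ^ j) ^ n : ℕ) : ENNReal)⁻¹ := by
    have h1 : (((Fintype.card F ^ j) ^ n : ℕ) : ENNReal) * μ Hs = 1 := by
      rw [← hcardT, ← nsmul_eq_mul]
      exact hsum.symm
    calc μ Hs = (((Fintype.card F ^ j) ^ n : ℕ) : ENNReal)⁻¹
        * ((((Fintype.card F ^ j) ^ n : ℕ) : ENNReal) * μ Hs) := by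
          rw [← mul_assoc, ENNReal.inv_mul_cancel hcast0 (ENNReal.natCast_ne_top _), one_mul]
    _ = _ := by rw [h1, mul_one]
  rw [hset, hHval, hj]
  have hre : ((Fintype.card F:ℝ) ^ (-(j:ℤ))) ^ n = (((Fintype.card F ^ j) ^ n : ℕ) : ℝ)⁻¹ := by
    rw [zpow_neg, zpow_natCast]
    push_cast
    rw [inv_pow]
  have hpos : (0:ℝ) < (((Fintype.card F ^ j) ^ n : ℕ) : ℝ) := by
    exact_mod_cast pow_pos (pow_pos Fintype.card_pos j) n
  rw [hre, ENNReal.ofReal_inv_of_pos hpos, ENNReal.ofReal_natCast]
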